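/- arXiv:2002.09985 — 2 statements merged into one kernel-verified Lean document; each statement's English description precedes it below -/
import Mathlib

section
/- Let P_A, P_B be orthogonal projections on a Hilbert space H with I - P_{B'} ≤ P_B in the appropriate sense, and Σ bounded self-adjoint with Σ² ≤ I, Σ_{B'} = P_{B'}ΣP_{B'}. Then P_A(P_{B'} - Σ_{B'}²)P_A ≤ (P_A + |P_B Σ P_A|)², where |T| := (T*T)^{1/2}. -/
open ContinuousLinearMap

/-- Let `P_A ≤ P_{B'}` be orthogonal projections on a complex Hilbert space,
`P_B := I - P_{B'}`, and `Σ` bounded self-adjoint with `0 ≤ Σ² ≤ I`;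
set `Σ_{B'} := P_{B'} Σ P_{B'}`.  Then
`P_A (P_{B'} - Σ_{B'}²) P_A ≤ (P_A + |P_B Σ P_A|)²`, where `|T| := (T^* T)^{1/2}`. -/
theorem projection_sandwich_le_sq {H : Type*} [NormedAddCommGroup H]
    [InnerProductSpace ℂ H] [CompleteSpace H]
    (PA PB' Sig absT : H →L[ℂ] H)
    (hPA : IsIdempotentElem PA) (hPAsa : IsSelfAdjoint PA)
    (hPB' : IsIdempotentElem PB') (hPB'sa : IsSelfAdjoint PB')
    (hle : PA * PB' = PA)
    (hSig : IsSelfAdjoint Sig)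
    (hSig0 : (Sig ^ 2).IsPositive) (hSig1 : (1 - Sig ^ 2).IsPositive)
    (habs : absT.IsPositive)
    (habs2 : absT ^ 2 =
      adjoint ((1 - PB') * Sig * PA) * ((1 - PB') * Sig * PA)) :
    ((PA + absT) ^ 2 - PA * (PB' - (PB' * Sig * PB') ^ 2) * PA).IsPositive := by
  have hTsa : IsSelfAdjoint absT := habs.isSelfAdjoint
  have hPB'PA : PB' * PA = PA := by
    calc PB' * PA = star PB' * star PA := by rw [hPB'sa.star_eq, hPAsa.star_eq]
    _ = star (PA * PB') := (star_mul _ _).symm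
    _ = PA := by rw [hle, hPAsa.star_eq]
  have hadj : adjoint ((1 - PB') * Sig * PA) = PA * Sig * (1 - PB') := by
    rw [← star_eq_adjoint, star_mul, star_mul, hPAsa.star_eq, hSig.star_eq]
    simp [star_sub, hPB'sa.star_eq, mul_assoc]
  have hT2PA : absT ^ 2 * PA = absT ^ 2 := by
    rw [habs2]; simp only [mul_assoc]; rw [hPA.eq]
  have hTPA : absT * PA = absT := by
    ext x
    have hv2 : (absT ^ 2) (x - PA x) = 0 := by
      have h := congrArg (fun (f : H →L[ℂ] H) => f x) hT2PA
      simp only [mul_apply_eq_comp] at h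
      simp [map_sub, h, sub_eq_zero]
    have hv : absT (absT (x - PA x)) = 0 := by
      simpa [pow_two, mul_apply] using hv2
    have h0 : absT (x - PA x) = 0 := by
      have : (inner ℂ (absT (x - PA x)) (absT (x - PA x)) : ℂ) = 0 := by
        nth_rewrite 1 [← hTsa.adjoint_eq]
        rw [adjoint_inner_left, hv, inner_zero_right]
      exact inner_self_eq_zero.mp this
    have hsub := map_sub absT x (PA x)
    rw [h0] at hsub
    rw [mul_apply_eq_comp]
    exact (sub_eq_zero.mp hsub.symm).symm
  have hPAT : PA * absT = absT := by
    calc PA * absT = star PA * star absT := by rw [hPAsa.star_eq, hTsa.star_eq]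
    _ = star (absT * PA) := (star_mul _ _).symm
    _ = absT := by rw [hTPA, hTsa.star_eq]
  have habs2' : absT * absT = PA * Sig * (1 - PB') * ((1 - PB') * Sig * PA) := by
    rw [← pow_two, habs2, hadj]
  have r1 : ∀ x : H →L[ℂ] H, PA * (PA * x) = PA * x := fun x => by
    rw [← mul_assoc, hPA.eq]
  have r2 : ∀ x : H →L[ℂ] H, PA * (PB' * x) = PA * x := fun x => by
    rw [← mul_assoc, hle]
  have r3 : ∀ x : H →L[ℂ] H, PB' * (PA * x) = PA * x := fun x => by
    rw [← mul_assoc, hPB'PA]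
  have r4 : ∀ x : H →L[ℂ] H, PB' * (PB' * x) = PB' * x := fun x => by
    rw [← mul_assoc, hPB'.eq]
  have r5 : ∀ x : H →L[ℂ] H, PA * (absT * x) = absT * x := fun x => by
    rw [← mul_assoc, hPAT]
  have r6 : ∀ x : H →L[ℂ] H, absT * (PA * x) = absT * x := fun x => by
    rw [← mul_assoc, hTPA]
  have key : (PA + absT) ^ 2 - PA * (PB' - (PB' * Sig * PB') ^ 2) * PA
      = (absT + absT) + PA * (Sig * (Sig * PA)) := by
    simp only [pow_two, mul_sub, sub_mul, mul_add, add_mul, mul_one, one_mul,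
      mul_assoc, habs2', r1, r2, r3, r4, r5, r6, hPA.eq, hle, hPB'PA, hPB'.eq,
      hPAT, hTPA]
    abel
  rw [key]
  have hpos : (PA * (Sig * (Sig * PA))).IsPositive := by
    have h := hSig0.adjoint_conj PA
    rw [hPAsa.adjoint_eq] at h
    simpa [mul_def, pow_two, mul_assoc, comp_assoc] using h
  exact (habs.add habs).add hpos
end

section
/- With the hypotheses of the finite-propagation-speed lemma, taking F(ω) = tanh(βω/2) with Fourier sine density F̃(s) = (π/β)csch(πs/β), one obtains ‖(I - X̂) tanh(β√L/2) X‖ ≤ -(1/π)‖1-χ̂‖_∞‖χ‖_∞ · ln|tanh(π r/(2β))| where r = dist(supp χ, supp(1-χ̂)). -/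
open MeasureTheory ContinuousLinearMap Real
open Filter Set


lemma tendsto_tanh_atTop' : Tendsto Real.tanh atTop (nhds 1) := by
  have h : ∀ x : ℝ, Real.tanh x = (1 - Real.exp (-(2*x))) / (1 + Real.exp (-(2*x))) := by
    intro x
    rw [Real.tanh_eq_sinh_div_cosh, Real.sinh_eq, Real.cosh_eq]
    have h2 : Real.exp (-(2*x)) * Real.exp x = Real.exp (-x) := by
      rw [← Real.exp_add]; ring_nf
    rw [div_eq_div_iff (by positivity) (by positivity)]
    nlinarith [Real.exp_pos x, Real.exp_pos (-x)]
  have hb : Tendsto (fun x : ℝ => -(2*x)) atTop atBot := by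
    apply tendsto_neg_atBot_iff.mpr
    exact Tendsto.const_mul_atTop (by norm_num) tendsto_id
  have he : Tendsto (fun x : ℝ => Real.exp (-(2*x))) atTop (nhds 0) :=
    Real.tendsto_exp_atBot.comp hb
  have h1 : Tendsto (fun x : ℝ => 1 - Real.exp (-(2*x))) atTop (nhds (1 - 0)) :=
    tendsto_const_nhds.sub he
  have h2 : Tendsto (fun x : ℝ => 1 + Real.exp (-(2*x))) atTop (nhds (1 + 0)) :=
    tendsto_const_nhds.add he
  have hdiv := h1.div h2 (by norm_num)
  norm_num at hdiv
  exact hdiv.congr (fun x => (h x).symm)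

lemma hasDerivAt_log_tanh_half (c : ℝ) (hc : 0 < c) (x : ℝ) (hx : 0 < x) :
    HasDerivAt (fun s => Real.log (Real.sinh (c*s/2)) - Real.log (Real.cosh (c*s/2)))
      (c * (Real.sinh (c*x))⁻¹) x := by
  have hu : HasDerivAt (fun s : ℝ => c*s/2) (c/2) x := by
    simpa using ((hasDerivAt_id x).const_mul c).div_const 2
  have hs : 0 < Real.sinh (c*x/2) := Real.sinh_pos_iff.mpr (by positivity)
  have hcsh : 0 < Real.cosh (c*x/2) := Real.cosh_pos (c*x/2)
  have h1 : HasDerivAt (fun s => Real.log (Real.sinh (c*s/2)))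
      (c/2 * Real.cosh (c*x/2) / Real.sinh (c*x/2)) x := by
    have := (((Real.hasDerivAt_sinh (c*x/2)).comp x hu :
      HasDerivAt (Real.sinh ∘ fun s => c*s/2) _ x)).log hs.ne'
    simpa [mul_comm] using this
  have h2 : HasDerivAt (fun s => Real.log (Real.cosh (c*s/2)))
      (c/2 * Real.sinh (c*x/2) / Real.cosh (c*x/2)) x := by
    have := (((Real.hasDerivAt_cosh (c*x/2)).comp x hu :
      HasDerivAt (Real.cosh ∘ fun s => c*s/2) _ x)).log hcsh.ne'
    simpa [mul_comm] using this
  have h := h1.sub h2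
  refine h.congr_deriv ?_
  have hdb : Real.sinh (c*x) = 2 * Real.sinh (c*x/2) * Real.cosh (c*x/2) := by
    have := Real.sinh_two_mul (c*x/2)
    rw [show 2*(c*x/2) = c*x by ring] at this
    exact this
  have hpy : Real.cosh (c*x/2)^2 - Real.sinh (c*x/2)^2 = 1 := Real.cosh_sq_sub_sinh_sq _
  have key : c/2 * Real.cosh (c*x/2) / Real.sinh (c*x/2)
      - c/2 * Real.sinh (c*x/2) / Real.cosh (c*x/2)
      = c/2 * ((Real.cosh (c*x/2)^2 - Real.sinh (c*x/2)^2)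
          / (Real.sinh (c*x/2) * Real.cosh (c*x/2))) := by
    rw [div_sub_div _ _ hs.ne' hcsh.ne', mul_div_assoc]
    congr 1
    ring
  rw [key, hpy, hdb]
  ring

lemma csch_integral (c r : ℝ) (hc : 0 < c) (hr : 0 < r) :
    IntegrableOn (fun s => c * (Real.sinh (c*s))⁻¹) (Set.Ioi r) ∧
    ∫ s in Set.Ioi r, c * (Real.sinh (c*s))⁻¹ = - Real.log (Real.tanh (c*r/2)) := by
  set F := fun s => Real.log (Real.sinh (c*s/2)) - Real.log (Real.cosh (c*s/2)) with hF
  have hderiv : ∀ x ∈ Set.Ici r, HasDerivAt F (c * (Real.sinh (c*x))⁻¹) x :=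
    fun x hx => hasDerivAt_log_tanh_half c hc x (lt_of_lt_of_le hr hx)
  have hpos : ∀ x ∈ Set.Ioi r, 0 ≤ c * (Real.sinh (c*x))⁻¹ := by
    intro x hx
    have h0 : 0 < Real.sinh (c*x) :=
      Real.sinh_pos_iff.mpr (mul_pos hc (hr.trans hx))
    exact le_of_lt (mul_pos hc (inv_pos.mpr h0))
  have htend : Tendsto F atTop (nhds 0) := by
    have heq : (fun x => Real.log (Real.tanh (c*x/2))) =ᶠ[atTop] F := by
      filter_upwards [eventually_gt_atTop 0] with x hx
      have hs : 0 < Real.sinh (c*x/2) := Real.sinh_pos_iff.mpr (by positivity)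
      simp only [hF]
      rw [Real.tanh_eq_sinh_div_cosh, Real.log_div hs.ne' (Real.cosh_pos _).ne']
    have hcx : Tendsto (fun x : ℝ => c*x/2) atTop atTop := by
      apply Tendsto.atTop_div_const (by norm_num)
      exact Tendsto.const_mul_atTop hc tendsto_id
    have hlog := (Real.continuousAt_log one_ne_zero).tendsto.comp
      (tendsto_tanh_atTop'.comp hcx)
    rw [Real.log_one] at hlog
    exact hlog.congr' heq
  have hint := integrableOn_Ioi_deriv_of_nonneg' hderiv hpos htend
  refine ⟨hint, ?_⟩
  rw [integral_Ioi_of_hasDerivAt_of_tendsto' hderiv hint htend]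
  have hs : 0 < Real.sinh (c*r/2) := Real.sinh_pos_iff.mpr (by positivity)
  simp only [hF]
  rw [Real.tanh_eq_sinh_div_cosh, Real.log_div hs.ne' (Real.cosh_pos _).ne']
  ring

/-- Finite-propagation-speed estimate for `F(ω) = tanh (β ω / 2)`, whose Fourier sine density
is `F̃(s) = (π/β) csch (π s / β)`: with `W s` playing the role of `sin (s √L)` and `X, Xhat`
the multiplication operators by `χ, χ̂` with `dist (supp χ, supp (1 - χ̂)) = r > 0`,
`‖(I - X̂) tanh (β √L / 2) X‖ ≤ -(1/π) ‖1 - χ̂‖_∞ ‖χ‖_∞ · ln |tanh (π r / (2 β))|`. -/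
theorem finite_propagation_speed_tanh_bound {H : Type*} [NormedAddCommGroup H]
    [InnerProductSpace ℂ H] [CompleteSpace H]
    (β : ℝ) (hβ : 0 < β)
    (X Xhat : H →L[ℂ] H) (r : ℝ) (hr : 0 < r)
    (W : ℝ → (H →L[ℂ] H)) (hW : ∀ s, ‖W s‖ ≤ 1)
    (hprop : ∀ s, 0 ≤ s → s < r → (1 - Xhat) * W s * X = 0)
    (hint : IntegrableOn
      (fun s => ((π / β) * (Real.sinh (π * s / β))⁻¹) • W s) (Set.Ioi (0 : ℝ)))
    (FL : H →L[ℂ] H)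
    (hFL : FL = (1 / π) •
      ∫ s in Set.Ioi (0 : ℝ), ((π / β) * (Real.sinh (π * s / β))⁻¹) • W s) :
    ‖(1 - Xhat) * FL * X‖ ≤
      -(1 / π) * ‖1 - Xhat‖ * ‖X‖ * Real.log |Real.tanh (π * r / (2 * β))| := by
  have hπ : (0:ℝ) < π := Real.pi_pos
  set c : ℝ := π / β with hcdef
  have hc : 0 < c := div_pos hπ hβ
  set A : H →L[ℂ] H := 1 - Xhat with hA
  set G : ℝ → (H →L[ℂ] H) :=
    fun s => ((π / β) * (Real.sinh (π * s / β))⁻¹) • W s with hG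
  set f : ℝ → (H →L[ℂ] H) := fun s => A * G s * X with hf
  -- Step 1: pull A and X inside the integral
  let Lmap : (H →L[ℂ] H) →L[ℂ] (H →L[ℂ] H) :=
    ((compL ℂ H H H) A).comp (((compL ℂ H H H).flip) X)
  have hLmap : ∀ T : H →L[ℂ] H, Lmap T = A * T * X := by
    intro T
    ext v
    simp [Lmap, ContinuousLinearMap.mul_apply]
  have key : A * FL * X = (1 / π : ℝ) • ∫ s in Set.Ioi (0:ℝ), f s := by
    rw [hFL, mul_smul_comm, smul_mul_assoc]
    congr 1
    rw [← hLmap, ← ContinuousLinearMap.integral_comp_comm Lmap hint]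
    exact setIntegral_congr_fun measurableSet_Ioi fun s _ => hLmap (G s)
  -- Step 2: the integrand vanishes on (0, r)
  have hvanish : ∀ s, 0 ≤ s → s < r → f s = 0 := by
    intro s h0 hsr
    have : A * W s * X = 0 := hprop s h0 hsr
    simp only [hf, hG, mul_smul_comm, smul_mul_assoc, this, smul_zero]
  have hsplit : (∫ s in Set.Ioi (0:ℝ), f s) = ∫ s in Set.Ici r, f s := by
    have heq : Set.EqOn f (Set.indicator (Set.Ici r) f) (Set.Ioi 0) := by
      intro s hs
      by_cases hsr : r ≤ s
      · exact (Set.indicator_of_mem (Set.mem_Ici.mpr hsr) f).symm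
      · rw [hvanish s (le_of_lt hs) (lt_of_not_ge hsr)]
        exact (Set.indicator_of_notMem (fun h => hsr (Set.mem_Ici.mp h)) f).symm
    rw [setIntegral_congr_fun measurableSet_Ioi heq,
      MeasureTheory.setIntegral_indicator measurableSet_Ici,
      show Set.Ioi (0:ℝ) ∩ Set.Ici r = Set.Ici r from
        Set.inter_eq_self_of_subset_right (fun x hx => lt_of_lt_of_le hr hx)]
  -- Step 3: the scalar bound function and its integral
  have hcs : ∀ s : ℝ, π * s / β = c * s := fun s => by rw [hcdef]; ring
  have hcr2 : c * r / 2 = π * r / (2 * β) := by rw [hcdef]; ring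
  obtain ⟨hgint, hgval⟩ := csch_integral c r hc hr
  have hgint' : IntegrableOn (fun s => ‖A‖ * ‖X‖ * (c * (Real.sinh (c*s))⁻¹))
      (Set.Ici r) := by
    rw [integrableOn_Ici_iff_integrableOn_Ioi]
    exact hgint.const_mul _
  -- Step 4: norm estimate
  have hbound : ‖∫ s in Set.Ici r, f s‖ ≤
      ‖A‖ * ‖X‖ * (- Real.log (Real.tanh (c*r/2))) := by
    have h1 : ‖∫ s in Set.Ici r, f s‖ ≤
        ∫ s in Set.Ici r, ‖A‖ * ‖X‖ * (c * (Real.sinh (c*s))⁻¹) := by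
      refine MeasureTheory.norm_integral_le_of_norm_le hgint' ?_
      filter_upwards [MeasureTheory.ae_restrict_mem measurableSet_Ici] with s hs
      have hs0 : 0 < s := lt_of_lt_of_le hr hs
      have hsinh : 0 < Real.sinh (c*s) := Real.sinh_pos_iff.mpr (mul_pos hc hs0)
      have hsc : 0 ≤ (π / β) * (Real.sinh (π * s / β))⁻¹ := by
        rw [hcs s]
        exact le_of_lt (mul_pos hc (inv_pos.mpr hsinh))
      calc ‖A * G s * X‖ ≤ ‖A * G s‖ * ‖X‖ := opNorm_comp_le _ _
        _ ≤ ‖A‖ * ‖G s‖ * ‖X‖ := by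
            exact mul_le_mul_of_nonneg_right (opNorm_comp_le _ _) (norm_nonneg _)
        _ ≤ ‖A‖ * ((π / β) * (Real.sinh (π * s / β))⁻¹) * ‖X‖ := by
            refine mul_le_mul_of_nonneg_right ?_ (norm_nonneg _)
            refine mul_le_mul_of_nonneg_left ?_ (norm_nonneg _)
            rw [hG]
            calc ‖((π / β) * (Real.sinh (π * s / β))⁻¹) • W s‖
                = |(π / β) * (Real.sinh (π * s / β))⁻¹| * ‖W s‖ := by
                  rw [norm_smul, Real.norm_eq_abs]
              _ ≤ ((π / β) * (Real.sinh (π * s / β))⁻¹) * 1 := by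
                  rw [abs_of_nonneg hsc]
                  exact mul_le_mul_of_nonneg_left (hW s) hsc
              _ = (π / β) * (Real.sinh (π * s / β))⁻¹ := mul_one _
        _ = ‖A‖ * ‖X‖ * (c * (Real.sinh (c*s))⁻¹) := by rw [hcs s]; ring
    calc ‖∫ s in Set.Ici r, f s‖
        ≤ ∫ s in Set.Ici r, ‖A‖ * ‖X‖ * (c * (Real.sinh (c*s))⁻¹) := h1
      _ = ‖A‖ * ‖X‖ * ∫ s in Set.Ici r, c * (Real.sinh (c*s))⁻¹ := by
          rw [MeasureTheory.integral_const_mul]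
      _ = ‖A‖ * ‖X‖ * (- Real.log (Real.tanh (c*r/2))) := by
          rw [MeasureTheory.integral_Ici_eq_integral_Ioi, hgval]
  -- Step 5: conclude
  have htanh_pos : 0 < Real.tanh (π * r / (2*β)) := by
    rw [Real.tanh_eq_sinh_div_cosh]
    exact div_pos (Real.sinh_pos_iff.mpr (by positivity)) (Real.cosh_pos _)
  rw [key, hsplit]
  rw [norm_smul, Real.norm_eq_abs, abs_of_pos (by positivity : (0:ℝ) < 1/π)]
  rw [abs_of_pos htanh_pos]
  calc (1/π) * ‖∫ s in Set.Ici r, f s‖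
      ≤ (1/π) * (‖A‖ * ‖X‖ * (- Real.log (Real.tanh (c*r/2)))) :=
        mul_le_mul_of_nonneg_left hbound (by positivity)
    _ = -(1/π) * ‖A‖ * ‖X‖ * Real.log (Real.tanh (π * r / (2*β))) := by
        rw [hcr2]; ring
end
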